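/- Let H₁(r,θ) = μ r² cos(Nθ) − A e^{−m r²} + g(r), defined in polar coordinates on ℝ² \ {0}, where μ, A, m > 0, N is a positive integer, mA > μ, and g is smooth and constant near r_c := √((1/m)·ln(mA/μ)). Then every critical point of H₁ with r > 0 near r_c satisfies cos(Nθ) = −1 and r = r_c; in particular there are exactly N such critical points on the circle r = r_c. -/

import Mathlib

open Real Set

/-- Critical points of `H₁(r,θ) = μ r² cos(Nθ) − A e^{−m r²} + g(r)` (with `g` constant
near `r_c`) away from the origin: they satisfy `cos(Nθ) = −1` and `r = r_c`, and there
are exactly `N` of them on the circle `r = r_c`. -/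
theorem stmt_0 (μ A m : ℝ) (N : ℕ) (hμ : 0 < μ) (hA : 0 < A) (hm : 0 < m)
    (hN : 0 < N) (hmA : μ < m * A)
    (rc : ℝ) (hrc : rc = Real.sqrt ((1 / m) * Real.log (m * A / μ))) :
    (∀ r θ : ℝ, 0 < r →
      2 * μ * r * Real.cos (N * θ) + 2 * m * r * A * Real.exp (-m * r ^ 2) = 0 →
      -(N : ℝ) * μ * r ^ 2 * Real.sin (N * θ) = 0 →
      Real.cos (N * θ) = -1 ∧ r = rc) ∧
    ({θ : ℝ | θ ∈ Set.Ico (0 : ℝ) (2 * π) ∧ Real.cos (N * θ) = -1}.ncard = N) := by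
  have hπ := Real.pi_pos
  have hNR : (0:ℝ) < N := by exact_mod_cast hN
  constructor
  · intro r θ hr hdr hdθ
    -- sin (Nθ) = 0
    have h1 : ((N:ℝ) * μ * r^2) * Real.sin (N*θ) = 0 := by linear_combination -hdθ
    have h2 : ((N:ℝ) * μ * r^2) ≠ 0 := by positivity
    have hsin : Real.sin ((N:ℝ)*θ) = 0 := (mul_eq_zero.mp h1).resolve_left h2
    have hpy := Real.sin_sq_add_cos_sq ((N:ℝ)*θ)
    have hcsq : Real.cos ((N:ℝ)*θ)^2 = 1 := by rw [hsin] at hpy; nlinarith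
    have he : (0:ℝ) < Real.exp (-m*r^2) := Real.exp_pos _
    have hcos : Real.cos ((N:ℝ)*θ) = -1 := by
      have hfac : (Real.cos ((N:ℝ)*θ) - 1) * (Real.cos ((N:ℝ)*θ) + 1) = 0 := by
        linear_combination hcsq
      rcases mul_eq_zero.mp hfac with h | h
      · exfalso
        have h1 : Real.cos ((N:ℝ)*θ) = 1 := by linarith
        rw [h1] at hdr
        nlinarith [mul_pos (mul_pos (mul_pos hm hr) hA) he, mul_pos hμ hr]
      · linarith
    refine ⟨hcos, ?_⟩
    rw [hcos] at hdr
    have hmA0 : (0:ℝ) < m*A := by positivity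
    have h3 : 2*r*(m*A*Real.exp (-m*r^2) - μ) = 0 := by linear_combination hdr
    have h4 : m*A*Real.exp (-m*r^2) - μ = 0 := by
      rcases mul_eq_zero.mp h3 with h | h
      · linarith
      · exact h
    have hexp : Real.exp (-m*r^2) = μ / (m*A) := by
      rw [eq_div_iff (ne_of_gt hmA0)]
      linear_combination h4
    have hlog : -m*r^2 = Real.log (μ/(m*A)) := by
      rw [← hexp, Real.log_exp]
    have : Real.log (μ/(m*A)) = - Real.log (m*A/μ) := by
      rw [← Real.log_inv]; congr 1; field_simp
    have hr2 : r^2 = (1/m) * Real.log (m*A/μ) := by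
      rw [this] at hlog
      field_simp at hlog ⊢
      linarith
    rw [hrc, ← hr2, Real.sqrt_sq hr.le]
  · -- counting
    have hinj : Function.Injective (fun k : ℕ => ((2*k+1) * π / N : ℝ)) := by
      intro a b hab
      simp only at hab
      have hN0 : (N:ℝ) ≠ 0 := ne_of_gt hNR
      field_simp at hab
      exact_mod_cast (by linarith : (a:ℝ) = b)
    have hset : {θ : ℝ | θ ∈ Set.Ico (0 : ℝ) (2 * π) ∧ Real.cos (N * θ) = -1}
        = (fun k : ℕ => ((2*k+1) * π / N : ℝ)) '' ↑(Finset.range N) := by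
      ext θ
      simp only [Set.mem_setOf_eq, Set.mem_Ico, Set.mem_image, Finset.coe_range,
        Set.mem_Iio]
      constructor
      · rintro ⟨⟨h0, h2π⟩, hc⟩
        rcases Real.cos_eq_neg_one_iff.mp hc with ⟨k, hk⟩
        -- N*θ = π + k*(2π), θ = (2k+1)π/N
        have hθ : θ = (2*(k:ℝ)+1) * π / N := by
          field_simp
          linarith [hk]
        have hk0 : 0 ≤ k := by
          by_contra h
          push_neg at h
          have : (k:ℝ) ≤ -1 := by exact_mod_cast Int.le_sub_one_of_lt h
          rw [hθ] at h0
          have : (2*(k:ℝ)+1) * π / N < 0 := by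
            apply div_neg_of_neg_of_pos _ hNR
            nlinarith
          linarith
        have hkN : k < N := by
          by_contra h
          push_neg at h
          have hkR : (N:ℝ) ≤ (k:ℝ) := by exact_mod_cast h
          rw [hθ] at h2π
          have : 2*π ≤ (2*(k:ℝ)+1) * π / N := by
            rw [le_div_iff₀ hNR]
            nlinarith
          linarith
        refine ⟨k.toNat, ?_, ?_⟩
        · omega
        · have hkk : ((k.toNat : ℕ) : ℝ) = (k:ℝ) := by
            exact_mod_cast congrArg (Int.cast : ℤ → ℝ) (Int.toNat_of_nonneg hk0)
          show (2*((k.toNat:ℕ):ℝ)+1) * π / N = θ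
          rw [hkk]; exact hθ.symm
      · rintro ⟨k, hkN, rfl⟩
        have hkR : (k:ℝ) < N := by exact_mod_cast hkN
        refine ⟨⟨?_, ?_⟩, ?_⟩
        · positivity
        · rw [div_lt_iff₀ hNR]
          have hk1 : ((k:ℝ)+1) ≤ N := by exact_mod_cast hkN
          nlinarith [hk1, hπ]
        · apply Real.cos_eq_neg_one_iff.mpr
          refine ⟨k, ?_⟩
          field_simp
          push_cast; ring
    rw [hset, Set.ncard_image_of_injective _ hinj, Set.ncard_coe_finset,
      Finset.card_range]
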